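/- At a positive equilibrium (S,x) with μ(S,x) = d(x), the determinant of the Jacobian J₁ equals D x (∂μ/∂S)(φ'(x) - γ'(x)), where φ'(x) = (d'(x) - ∂μ/∂x)/(∂μ/∂S) and γ'(x) = -(x d(x))'/D. Consequently, if φ'(x) > γ'(x) the equilibrium is locally asymptotically stable (det > 0 with negative trace), and if φ'(x) < γ'(x) it is a saddle point (det < 0). -/
import Mathlib
open Matrix

lemma spec2 {K : Type*} [Field K] (a b c d z : K) :
    z ∈ spectrum K !![a, b; c, d] ↔ (z - a) * (z - d) - b * c = 0 := by
  rw [spectrum.mem_iff, Matrix.isUnit_iff_isUnit_det, isUnit_iff_ne_zero, not_not]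
  have : (algebraMap K (Matrix (Fin 2) (Fin 2) K)) z - !![a, b; c, d]
      = !![z - a, -b; -c, z - d] := by
    ext i j
    fin_cases i <;> fin_cases j <;>
      simp [Matrix.algebraMap_matrix_apply]
  rw [this, Matrix.det_fin_two_of]
  ring_nf

lemma map2 {K L : Type*} (f : K → L) (a b c d : K) :
    (!![a, b; c, d]).map f = !![f a, f b; f c, f d] := by
  ext i j
  fin_cases i <;> fin_cases j <;> simp

set_option maxHeartbeats 1000000 in
theorem stmt10 (D S x muval muS mux dval d' : ℝ)
    (hD : 0 < D) (hx : 0 < x)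
    (heq : muval = dval)          -- μ(S,x) = d(x) at the positive equilibrium
    (hdD : dval ≤ D)
    (hmuS : 0 < muS)              -- ∂μ/∂S > 0
    (hmux : mux < 0)              -- ∂μ/∂x < 0
    (hd' : d' < 0)                -- d' < 0
    (hxd : 0 < dval + x * d')     -- (x d(x))' > 0
    (φ' γ' : ℝ)
    (hφ' : φ' = (d' - mux) / muS)
    (hγ' : γ' = -(dval + x * d') / D)
    (J₁ : Matrix (Fin 2) (Fin 2) ℝ)
    (hJ₁ : J₁ = !![-D - x * muS, -x * mux - muval; x * muS, x * mux - x * d']) :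
    J₁.det = D * x * muS * (φ' - γ') ∧
    (γ' < φ' → 0 < J₁.det ∧ J₁.trace < 0 ∧
      ∀ z ∈ spectrum ℂ (J₁.map (algebraMap ℝ ℂ)), z.re < 0) ∧
    (φ' < γ' → J₁.det < 0 ∧
      ∃ z ∈ spectrum ℝ J₁, 0 < z ∧ ∃ w ∈ spectrum ℝ J₁, w < 0) := by
  subst heq
  set A : ℝ := -D - x * muS with hA
  set B : ℝ := -x * mux - muval with hB
  set C : ℝ := x * muS with hC
  set E : ℝ := x * mux - x * d' with hE
  have hdet : J₁.det = A * E - B * C := by rw [hJ₁, Matrix.det_fin_two_of]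
  have htr : J₁.trace = A + E := by
    rw [hJ₁, Matrix.trace_fin_two_of]
  have hdetval : J₁.det = D * x * muS * (φ' - γ') := by
    rw [hdet, hφ', hγ']
    field_simp [hA, hB, hC, hE]
    ring
  have htrneg : A + E < 0 := by
    have h1 : x * d' > -D := by nlinarith
    have h2 : x * mux < 0 := mul_neg_of_pos_of_neg hx hmux
    have h3 : 0 < x * muS := mul_pos hx hmuS
    simp only [hA, hE]
    nlinarith
  refine ⟨hdetval, ?_, ?_⟩
  · intro hlt
    have hdpos : 0 < J₁.det := by
      rw [hdetval]
      exact mul_pos (by positivity) (sub_pos.mpr hlt)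
    refine ⟨hdpos, by rw [htr]; exact htrneg, ?_⟩
    intro z hz
    rw [hJ₁, map2, spec2] at hz
    have hq : 0 < A * E - B * C := by rwa [hdet] at hdpos
    have hre := congrArg Complex.re hz
    have him := congrArg Complex.im hz
    simp [Complex.mul_re, Complex.mul_im] at hre him
    rcases eq_or_ne z.im 0 with h0 | h0
    · rw [h0] at hre
      by_contra hcon
      push_neg at hcon
      nlinarith [hre, htrneg, hq, sq_nonneg z.re]
    · have : 2 * z.re = A + E := by
        rcases mul_eq_zero.mp (by nlinarith [him] : z.im * (2 * z.re - (A + E)) = 0) with h | h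
        · exact absurd h h0
        · linarith
      linarith
  · intro hlt
    have hdneg : J₁.det < 0 := by
      rw [hdetval]
      have : φ' - γ' < 0 := by linarith
      nlinarith [mul_pos (mul_pos hD hx) hmuS]
    refine ⟨hdneg, ?_⟩
    have hd' : A * E - B * C < 0 := by rwa [hdet] at hdneg
    set t : ℝ := A + E with ht
    set q : ℝ := A * E - B * C with hq
    set s : ℝ := Real.sqrt (t ^ 2 - 4 * q) with hs
    have hs2 : s ^ 2 = t ^ 2 - 4 * q := Real.sq_sqrt (by nlinarith)
    have hsabs : |t| < s := by
      have hsnn : 0 ≤ s := Real.sqrt_nonneg _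
      nlinarith [abs_nonneg t, sq_abs t]
    have h1 : ((t + s) / 2) ∈ spectrum ℝ J₁ := by
      rw [hJ₁, spec2]
      linear_combination hs2 / 4
    have h2 : ((t - s) / 2) ∈ spectrum ℝ J₁ := by
      rw [hJ₁, spec2]
      linear_combination hs2 / 4
    obtain ⟨hl, hr⟩ := abs_lt.mp hsabs
    exact ⟨(t + s) / 2, h1, by linarith, (t - s) / 2, h2, by linarith⟩
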